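/- arXiv:2201.08940 — 4 statements merged into one kernel-verified Lean document; each statement's English description precedes it below -/
import Mathlib

section
/- Let E be a finite set, w : E → ℝ, and let 𝒴' be a finite collection of subsets of E. For e ∈ E, let In(e) be the number of sets in 𝒴' containing e and Ex(e) = |𝒴'| − In(e). Define w'(e) = w(e)·(Ex(e) − In(e)). Then for every subset X ⊆ E, Σ_{Y ∈ 𝒴'} w(X △ Y) = w'(X) + Σ_{e ∈ E} w(e)·In(e), where w(Z) = Σ_{e ∈ Z} w(e) and w'(Z) = Σ_{e ∈ Z} w'(e). -/
open Finset

/-- Lemma 3: with `w'(e) = w(e)·(Ex(e) − In(e))`, for every `X ⊆ E`,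
`Σ_{Y ∈ 𝒴'} w(X △ Y) = w'(X) + Σ_{e ∈ E} w(e)·In(e)`. -/
theorem sum_weighted_symmDiff_eq
    {E : Type*} [Fintype E] [DecidableEq E] (w : E → ℝ)
    {n : ℕ} (𝒴 : Fin n → Finset E) (X : Finset E) :
    (∑ i, ∑ e ∈ symmDiff X (𝒴 i), w e) =
      (∑ e ∈ X, w e *
          (((Finset.univ.filter fun i : Fin n => e ∉ 𝒴 i).card : ℝ) -
            ((Finset.univ.filter fun i : Fin n => e ∈ 𝒴 i).card : ℝ))) +
        ∑ e : E, w e * ((Finset.univ.filter fun i : Fin n => e ∈ 𝒴 i).card : ℝ) := by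
  have h1 : (∑ i, ∑ e ∈ symmDiff X (𝒴 i), w e)
      = ∑ e : E, w e * ((Finset.univ.filter fun i : Fin n => e ∈ symmDiff X (𝒴 i)).card : ℝ) := by
    have : ∀ i : Fin n, ∑ e ∈ symmDiff X (𝒴 i), w e
        = ∑ e : E, if e ∈ symmDiff X (𝒴 i) then w e else 0 := by
      intro i
      rw [Finset.sum_ite_mem, Finset.univ_inter]
    simp only [this]
    rw [Finset.sum_comm]
    congr 1
    ext e
    rw [← Finset.sum_filter, Finset.sum_const, nsmul_eq_mul, mul_comm]
  rw [h1]
  rw [← Finset.sum_filter_add_sum_filter_not Finset.univ (· ∈ X)]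
  have hX : Finset.univ.filter (· ∈ X) = X := by simp
  rw [hX]
  have h2 := (Finset.sum_filter_add_sum_filter_not Finset.univ (· ∈ X)
      (fun e => w e * ((Finset.univ.filter fun i : Fin n => e ∈ 𝒴 i).card : ℝ))).symm
  rw [hX] at h2
  rw [h2, ← add_assoc]
  congr 1
  · rw [← Finset.sum_add_distrib]
    apply Finset.sum_congr rfl
    intro e he
    have : (Finset.univ.filter fun i : Fin n => e ∈ symmDiff X (𝒴 i))
        = Finset.univ.filter fun i : Fin n => e ∉ 𝒴 i := by
      apply Finset.filter_congr
      intro i _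
      simp [Finset.mem_symmDiff, he]
    rw [this]; ring
  · apply Finset.sum_congr rfl
    intro e he
    simp only [Finset.mem_filter] at he
    have : (Finset.univ.filter fun i : Fin n => e ∈ symmDiff X (𝒴 i))
        = Finset.univ.filter fun i : Fin n => e ∈ 𝒴 i := by
      apply Finset.filter_congr
      intro i _
      simp [Finset.mem_symmDiff, he.2]
    rw [this]
end

section
/- Let E be a finite set, w : E → ℝ, 𝒴' a finite collection of subsets of E, and define w'(e) = w(e)·(Ex(e) − In(e)) as before. Then for any family 𝒳 of subsets of E, a set X ∈ 𝒳 maximizes Σ_{Y ∈ 𝒴'} w(X △ Y) over 𝒳 if and only if X maximizes w'(X) over 𝒳. -/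
open Finset

lemma sum_ite_card {n : ℕ} (p : Fin n → Prop) [DecidablePred p] (c : ℝ) :
    (∑ i, if p i then c else 0) = ((Finset.univ.filter p).card : ℝ) * c := by
  rw [Finset.sum_ite, Finset.sum_const, Finset.sum_const_zero, add_zero, nsmul_eq_mul]

lemma symmDiff_sum_key {E : Type*} [Fintype E] [DecidableEq E] (w : E → ℝ)
    {n : ℕ} (𝒴 : Fin n → Finset E) (Z : Finset E) :
    (∑ i, ∑ e ∈ symmDiff Z (𝒴 i), w e) =
      (∑ e ∈ Z, w e * (((Finset.univ.filter fun i : Fin n => e ∉ 𝒴 i).card : ℝ) -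
        ((Finset.univ.filter fun i : Fin n => e ∈ 𝒴 i).card : ℝ)))
      + ∑ i, ∑ e ∈ 𝒴 i, w e := by
  have h1 : ∀ s : Finset E, (∑ e ∈ s, w e) = ∑ e : E, if e ∈ s then w e else 0 := by
    intro s
    rw [Finset.sum_ite_mem, Finset.univ_inter]
  calc (∑ i, ∑ e ∈ symmDiff Z (𝒴 i), w e)
      = ∑ i, ∑ e : E, if e ∈ symmDiff Z (𝒴 i) then w e else 0 := by
        simp_rw [h1]
    _ = ∑ e : E, ∑ i, if e ∈ symmDiff Z (𝒴 i) then w e else 0 := Finset.sum_comm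
    _ = ∑ e : E, ((if e ∈ Z then
          w e * (((Finset.univ.filter fun i : Fin n => e ∉ 𝒴 i).card : ℝ) -
            ((Finset.univ.filter fun i : Fin n => e ∈ 𝒴 i).card : ℝ))
          else 0) + ∑ i, if e ∈ 𝒴 i then w e else 0) := by
        refine Finset.sum_congr rfl fun e _ => ?_
        by_cases hZ : e ∈ Z
        · have he : ∀ i, (e ∈ symmDiff Z (𝒴 i)) ↔ (e ∉ 𝒴 i) := fun i => by
            simp [Finset.mem_symmDiff, hZ]
          simp only [he, hZ, if_true]
          rw [sum_ite_card, sum_ite_card]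
          ring
        · have he : ∀ i, (e ∈ symmDiff Z (𝒴 i)) ↔ (e ∈ 𝒴 i) := fun i => by
            simp [Finset.mem_symmDiff, hZ]
          simp only [he, hZ, if_false, zero_add]
    _ = _ := by
        rw [Finset.sum_add_distrib, Finset.sum_ite_mem, Finset.univ_inter]
        congr 1
        rw [Finset.sum_comm]
        exact Finset.sum_congr rfl fun i _ => (h1 (𝒴 i)).symm

/-- A set `X ∈ 𝒳` maximizes `Σ_{Y ∈ 𝒴'} w(X △ Y)` over `𝒳` iff it maximizes
`w'(X) = Σ_{e ∈ X} w(e)·(Ex(e) − In(e))` over `𝒳`. -/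
theorem maximizer_symmDiff_iff_maximizer_modified_weight
    {E : Type*} [Fintype E] [DecidableEq E] (w : E → ℝ)
    {n : ℕ} (𝒴 : Fin n → Finset E) (𝒳 : Set (Finset E)) (X : Finset E)
    (hX : X ∈ 𝒳) :
    letI w' : E → ℝ := fun e =>
      w e * (((Finset.univ.filter fun i : Fin n => e ∉ 𝒴 i).card : ℝ) -
        ((Finset.univ.filter fun i : Fin n => e ∈ 𝒴 i).card : ℝ))
    ((∀ Z ∈ 𝒳, (∑ i, ∑ e ∈ symmDiff Z (𝒴 i), w e) ≤ ∑ i, ∑ e ∈ symmDiff X (𝒴 i), w e) ↔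
      (∀ Z ∈ 𝒳, (∑ e ∈ Z, w' e) ≤ ∑ e ∈ X, w' e)) := by
  constructor
  · intro h Z hZ
    have := h Z hZ
    rw [symmDiff_sum_key w 𝒴 Z, symmDiff_sum_key w 𝒴 X] at this
    simpa using by linarith
  · intro h Z hZ
    have := h Z hZ
    simp only [] at this
    rw [symmDiff_sum_key w 𝒴 Z, symmDiff_sum_key w 𝒴 X]
    linarith
end

section
/- Let G' = (V', E') be a graph, r' a nonnegative integer with 2r' ≤ |V'|, and w' : E' → ℝ a weight function. Construct H by adding a set U of |V'| − 2r' new vertices and all edges F = {{u, v} : u ∈ U, v ∈ V'}, with w'(f) = 0 for f ∈ F. If M* is a maximum-weight perfect matching of H, then M* \ F is a matching of G' of size exactly r', and for every matching M' of G' with |M'| = r', w'(M') ≤ w'(M* \ F). -/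
open Finset
open scoped Classical

/-- The auxiliary graph `H`: the graph `G'` together with `m` fresh vertices,
each joined to every original vertex (and to no fresh vertex). -/
def Hgraph {V' : Type*} (G' : SimpleGraph V') (m : ℕ) :
    SimpleGraph (V' ⊕ Fin m) where
  Adj x y :=
    match x, y with
    | Sum.inl a, Sum.inl b => G'.Adj a b
    | Sum.inl _, Sum.inr _ => True
    | Sum.inr _, Sum.inl _ => True
    | Sum.inr _, Sum.inr _ => False
  symm := by
    constructor
    rintro (a | a) (b | b) h
    exacts [h.symm, trivial, trivial, h]
  loopless := by
    constructor
    rintro (a | a) h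
    exacts [G'.irrefl h, h]

/-- An edge of `H` belonging to `F`, i.e. incident to a fresh vertex. -/
def isFEdge {V' : Type*} {m : ℕ} (e : Sym2 (V' ⊕ Fin m)) : Prop :=
  ∃ u : Fin m, Sum.inr u ∈ e

/-- `M` is a matching of `G`: its members are edges of `G` and no two distinct
members share an endpoint. -/
def IsMatchingF {α : Type*} (G : SimpleGraph α) (M : Finset (Sym2 α)) : Prop :=
  (↑M : Set (Sym2 α)) ⊆ G.edgeSet ∧
    ∀ e ∈ M, ∀ f ∈ M, e ≠ f → ∀ v : α, v ∈ e → v ∉ f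

/-- `M` is a perfect matching of `G`: a matching covering every vertex. -/
def IsPerfectMatchingF {α : Type*} (G : SimpleGraph α) (M : Finset (Sym2 α)) :
    Prop :=
  IsMatchingF G M ∧ ∀ v : α, ∃ e ∈ M, v ∈ e


/-- The weight on edges of `H` extending `w'` by `0` on the fresh edges `F`. -/
noncomputable def liftedWeight {V' : Type*} {m : ℕ} (w' : Sym2 V' → ℝ) :
    Sym2 (V' ⊕ Fin m) → ℝ :=
  Sym2.lift ⟨fun x y =>
    match x, y with
    | Sum.inl a, Sum.inl b => w' s(a, b)
    | _, _ => 0,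
    by rintro (a | a) (b | b) <;> simp [Sym2.eq_swap]⟩

lemma edge_cases {V' : Type*} {m : ℕ} {G' : SimpleGraph V'}
    {e : Sym2 (V' ⊕ Fin m)} (he : e ∈ (Hgraph G' m).edgeSet) :
    (∃ a b, G'.Adj a b ∧ e = s(Sum.inl a, Sum.inl b)) ∨
    (∃ (a : V') (u : Fin m), e = s(Sum.inl a, Sum.inr u)) := by
  induction e using Sym2.ind with
  | _ x y =>
    rw [SimpleGraph.mem_edgeSet] at he
    rcases x with a | a <;> rcases y with b | b
    · exact Or.inl ⟨a, b, he, rfl⟩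
    · exact Or.inr ⟨a, b, rfl⟩
    · exact Or.inr ⟨b, a, Sym2.eq_swap⟩
    · exact absurd he (by simp [Hgraph])

lemma lifted_map {V' : Type*} {m : ℕ} (w' : Sym2 V' → ℝ) (e : Sym2 V') :
    liftedWeight (m := m) w' (e.map Sum.inl) = w' e := by
  induction e using Sym2.ind with
  | _ a b => rfl

lemma lifted_F {V' : Type*} {m : ℕ} (w' : Sym2 V' → ℝ) (a : V') (u : Fin m) :
    liftedWeight w' s(Sum.inl a, Sum.inr u) = 0 := rfl

lemma notF_inl {V' : Type*} {m : ℕ} (a b : V') :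
    ¬ isFEdge (s(Sum.inl a, Sum.inl b) : Sym2 (V' ⊕ Fin m)) := by
  rintro ⟨u, hu⟩; simp [Sym2.mem_iff] at hu

lemma F_of {V' : Type*} {m : ℕ} (a : V') (u : Fin m) :
    isFEdge (s(Sum.inl a, Sum.inr u)) := ⟨u, by simp⟩

lemma card_mem_edge {α : Type*} [Fintype α] [DecidableEq α] {G : SimpleGraph α}
    {e : Sym2 α} (he : e ∈ G.edgeSet) :
    (univ.filter (fun v => v ∈ e)).card = 2 := by
  induction e using Sym2.ind with
  | _ a b =>
    rw [SimpleGraph.mem_edgeSet] at he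
    have hab : a ≠ b := he.ne
    have h : univ.filter (fun v => v ∈ s(a, b)) = {a, b} := by
      ext v; simp [Sym2.mem_iff]
    rw [h, card_pair hab]

/-- If `M*` is a maximum-weight perfect matching of `H`, then `M* \ F` is a
matching of size `r'` whose edges come from `G'`, and its weight is at least
the weight of every size-`r'` matching of `G'`. -/
theorem maxWeight_perfectMatching_gives_max_matching
    {V' : Type*} [Fintype V'] [DecidableEq V'] (G' : SimpleGraph V') (r' : ℕ)
    (h2r : 2 * r' ≤ Fintype.card V') (w' : Sym2 V' → ℝ)
    (Mstar : Finset (Sym2 (V' ⊕ Fin (Fintype.card V' - 2 * r'))))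
    (hperf : IsPerfectMatchingF (Hgraph G' (Fintype.card V' - 2 * r')) Mstar)
    (hmax : ∀ M : Finset (Sym2 (V' ⊕ Fin (Fintype.card V' - 2 * r'))),
      IsPerfectMatchingF (Hgraph G' (Fintype.card V' - 2 * r')) M →
        ∑ e ∈ M, liftedWeight w' e ≤ ∑ e ∈ Mstar, liftedWeight w' e) :
    IsMatchingF (Hgraph G' (Fintype.card V' - 2 * r'))
        (Mstar.filter (fun e => ¬ isFEdge e)) ∧
      (Mstar.filter (fun e => ¬ isFEdge e)).card = r' ∧
      (∀ e ∈ Mstar.filter (fun e => ¬ isFEdge e),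
        ∃ e' ∈ G'.edgeSet, e = e'.map Sum.inl) ∧
      ∀ M' : Finset (Sym2 V'), IsMatchingF G' M' → M'.card = r' →
        ∑ e ∈ M', w' e ≤ ∑ e ∈ Mstar.filter (fun e => ¬ isFEdge e), liftedWeight w' e := by
  obtain ⟨⟨hedges, hdisj⟩, hcover⟩ := hperf
  have hedges' : ∀ e ∈ Mstar, e ∈ (Hgraph G' (Fintype.card V' - 2 * r')).edgeSet :=
    fun e he => hedges he
  -- Part 1: the filtered set is a matching.
  have part1 : IsMatchingF (Hgraph G' (Fintype.card V' - 2 * r'))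
      (Mstar.filter fun e => ¬ isFEdge e) := by
    constructor
    · intro e he
      exact hedges (mem_coe.mpr (mem_filter.mp (mem_coe.mp he)).1)
    · intro e he f hf
      exact hdisj e (mem_filter.mp he).1 f (mem_filter.mp hf).1
  -- Part 3
  have part3 : ∀ e ∈ Mstar.filter (fun e => ¬ isFEdge e),
      ∃ e' ∈ G'.edgeSet, e = e'.map Sum.inl := by
    intro e he
    obtain ⟨heM, heF⟩ := mem_filter.mp he
    rcases edge_cases (hedges' e heM) with ⟨a, b, hab, rfl⟩ | ⟨a, u, rfl⟩
    · exact ⟨s(a, b), hab, rfl⟩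
    · exact absurd (F_of a u) heF
  -- Part 2: counting
  set A : Sym2 (V' ⊕ Fin (Fintype.card V' - 2 * r')) → Finset V' :=
    fun e => univ.filter (fun v => Sum.inl v ∈ e) with hA
  set B : Sym2 (V' ⊕ Fin (Fintype.card V' - 2 * r')) → Finset (Fin (Fintype.card V' - 2 * r')) :=
    fun e => univ.filter (fun u => Sum.inr u ∈ e) with hB
  have hAcard : ∀ e ∈ Mstar,
      (¬ isFEdge e → (A e).card = 2 ∧ (B e).card = 0) ∧
      (isFEdge e → (A e).card = 1 ∧ (B e).card = 1) := by
    intro e heM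
    rcases edge_cases (hedges' e heM) with ⟨a, b, hab, rfl⟩ | ⟨a, u, rfl⟩
    · refine ⟨fun _ => ⟨?_, ?_⟩, fun hF => absurd hF (notF_inl a b)⟩
      · have h : A s(Sum.inl a, Sum.inl b) = {a, b} := by
          ext v; simp [hA, Sym2.mem_iff]
        rw [h, card_pair hab.ne]
      · have h : B s(Sum.inl a, Sum.inl b) = ∅ := by
          ext v; simp [hB, Sym2.mem_iff]
        simp [h]
    · refine ⟨fun hnF => absurd (F_of a u) hnF, fun _ => ⟨?_, ?_⟩⟩
      · have h : A s(Sum.inl a, Sum.inr u) = {a} := by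
          ext v; simp [hA, Sym2.mem_iff]
        simp [h]
      · have h : B s(Sum.inl a, Sum.inr u) = {u} := by
          ext v; simp [hB, Sym2.mem_iff]
        simp [h]
  have hV : Fintype.card V' = ∑ e ∈ Mstar, (A e).card := by
    have huniv : (univ : Finset V') = Mstar.biUnion A := by
      apply Subset.antisymm
      · intro v _
        obtain ⟨e, heM, hve⟩ := hcover (Sum.inl v)
        exact mem_biUnion.mpr ⟨e, heM, mem_filter.mpr ⟨mem_univ v, hve⟩⟩
      · intro v _; exact mem_univ v
    have hd : ∀ e ∈ Mstar, ∀ f ∈ Mstar, e ≠ f → Disjoint (A e) (A f) := by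
      intro e he f hf hef
      rw [disjoint_left]
      intro v hv hvf
      exact hdisj e he f hf hef (Sum.inl v) (mem_filter.mp hv).2 (mem_filter.mp hvf).2
    calc Fintype.card V' = (univ : Finset V').card := card_univ.symm
      _ = (Mstar.biUnion A).card := by rw [huniv]
      _ = ∑ e ∈ Mstar, (A e).card := card_biUnion hd
  have hU : Fintype.card V' - 2 * r' = ∑ e ∈ Mstar, (B e).card := by
    have huniv : (univ : Finset (Fin (Fintype.card V' - 2 * r'))) = Mstar.biUnion B := by
      apply Subset.antisymm
      · intro u _
        obtain ⟨e, heM, hue⟩ := hcover (Sum.inr u)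
        exact mem_biUnion.mpr ⟨e, heM, mem_filter.mpr ⟨mem_univ u, hue⟩⟩
      · intro u _; exact mem_univ u
    have hd : ∀ e ∈ Mstar, ∀ f ∈ Mstar, e ≠ f → Disjoint (B e) (B f) := by
      intro e he f hf hef
      rw [disjoint_left]
      intro u hu huf
      exact hdisj e he f hf hef (Sum.inr u) (mem_filter.mp hu).2 (mem_filter.mp huf).2
    calc Fintype.card V' - 2 * r'
        = (univ : Finset (Fin (Fintype.card V' - 2 * r'))).card := by
          rw [card_univ, Fintype.card_fin]
      _ = (Mstar.biUnion B).card := by rw [huniv]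
      _ = ∑ e ∈ Mstar, (B e).card := card_biUnion hd
  have hsplitA : ∑ e ∈ Mstar, (A e).card =
      (Mstar.filter (fun e => isFEdge e)).card +
        2 * (Mstar.filter (fun e => ¬ isFEdge e)).card := by
    rw [← sum_filter_add_sum_filter_not Mstar (fun e => isFEdge e)]
    congr 1
    · rw [Finset.sum_congr rfl
        (fun e he => ((hAcard e (mem_filter.mp he).1).2 (mem_filter.mp he).2).1)]
      simp
    · rw [Finset.sum_congr rfl
        (fun e he => ((hAcard e (mem_filter.mp he).1).1 (mem_filter.mp he).2).1)]
      simp [mul_comm]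
  have hsplitB : ∑ e ∈ Mstar, (B e).card =
      (Mstar.filter (fun e => isFEdge e)).card := by
    rw [← sum_filter_add_sum_filter_not Mstar (fun e => isFEdge e)]
    rw [Finset.sum_congr rfl
      (fun e he => ((hAcard e (mem_filter.mp he).1).2 (mem_filter.mp he).2).2)]
    rw [Finset.sum_congr rfl
      (fun e he => ((hAcard e (mem_filter.mp he).1).1 (mem_filter.mp he).2).2)]
    simp
  have part2 : (Mstar.filter (fun e => ¬ isFEdge e)).card = r' := by omega
  refine ⟨part1, part2, part3, ?_⟩
  -- Part 4
  rintro M' ⟨hM'e, hM'disj⟩ hM'card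
  set S : Finset V' := M'.biUnion (fun e => univ.filter (fun v => v ∈ e)) with hSdef
  have hScard : S.card = 2 * r' := by
    rw [hSdef, card_biUnion]
    · rw [Finset.sum_congr rfl (fun e he => card_mem_edge (hM'e (mem_coe.mpr he)))]
      simp [hM'card, mul_comm]
    · intro e he f hf hef
      rw [Function.onFun, disjoint_left]
      intro v hv hvf
      exact hM'disj e he f hf hef v (mem_filter.mp hv).2 (mem_filter.mp hvf).2
  set T : Finset V' := univ \ S with hTdef
  have hTcard : T.card = Fintype.card V' - 2 * r' := by
    rw [hTdef, card_sdiff_of_subset (subset_univ S), card_univ, hScard]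
  let g : {x // x ∈ T} ≃ Fin (Fintype.card V' - 2 * r') := T.equivFinOfCardEq hTcard
  set M1 : Finset (Sym2 (V' ⊕ Fin (Fintype.card V' - 2 * r'))) :=
    M'.image (Sym2.map Sum.inl) with hM1
  set M2 : Finset (Sym2 (V' ⊕ Fin (Fintype.card V' - 2 * r'))) :=
    T.attach.image (fun v => s(Sum.inl v.1, Sum.inr (g v))) with hM2
  have hinj : Function.Injective
      (Sym2.map (Sum.inl : V' → V' ⊕ Fin (Fintype.card V' - 2 * r'))) :=
    Sym2.map.injective Sum.inl_injective
  have hM1noF : ∀ e ∈ M1, ∀ u : Fin (Fintype.card V' - 2 * r'), Sum.inr u ∉ e := by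
    intro e he u hu
    obtain ⟨e', _, rfl⟩ := mem_image.mp he
    obtain ⟨a, _, ha⟩ := Sym2.mem_map.mp hu
    exact Sum.inl_ne_inr ha
  have hM1mem : ∀ e ∈ M1, ∀ x ∈ e, ∃ a, x = Sum.inl a ∧ a ∈ S := by
    intro e he x hx
    obtain ⟨e', he', rfl⟩ := mem_image.mp he
    obtain ⟨a, hae, rfl⟩ := Sym2.mem_map.mp hx
    exact ⟨a, rfl, mem_biUnion.mpr ⟨e', he', mem_filter.mpr ⟨mem_univ a, hae⟩⟩⟩
  have hdisjM : Disjoint M1 M2 := by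
    rw [disjoint_left]
    intro e he1 he2
    obtain ⟨v, _, rfl⟩ := mem_image.mp he2
    exact hM1noF _ he1 (g v) (by simp)
  have hMperf : IsPerfectMatchingF (Hgraph G' (Fintype.card V' - 2 * r')) (M1 ∪ M2) := by
    refine ⟨⟨?_, ?_⟩, ?_⟩
    · intro e he
      rcases mem_union.mp (mem_coe.mp he) with h | h
      · obtain ⟨e', he', rfl⟩ := mem_image.mp h
        have h3 := hM'e (mem_coe.mpr he')
        revert h3
        induction e' using Sym2.ind with
        | _ a b =>
          intro h3
          rw [SimpleGraph.mem_edgeSet] at h3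
          rw [Sym2.map_pair_eq, SimpleGraph.mem_edgeSet]
          exact h3
      · obtain ⟨v, _, rfl⟩ := mem_image.mp h
        exact ((Hgraph G' (Fintype.card V' - 2 * r')).mem_edgeSet).mpr trivial
    · intro e he f hf hef x hxe hxf
      rcases mem_union.mp he with h1 | h1 <;> rcases mem_union.mp hf with h2 | h2
      · -- both in M1
        obtain ⟨e', he', rfl⟩ := mem_image.mp h1
        obtain ⟨f', hf', rfl⟩ := mem_image.mp h2
        have hne : e' ≠ f' := fun h => hef (by rw [h])
        obtain ⟨a, hae, rfl⟩ := Sym2.mem_map.mp hxe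
        obtain ⟨b, hbf, hb⟩ := Sym2.mem_map.mp hxf
        exact hM'disj e' he' f' hf' hne a hae ((Sum.inl_injective hb) ▸ hbf)
      · -- e in M1, f in M2
        obtain ⟨a, rfl, haS⟩ := hM1mem e h1 x hxe
        obtain ⟨⟨t, ht⟩, _, rfl⟩ := mem_image.mp h2
        rcases Sym2.mem_iff.mp hxf with h | h
        · obtain rfl : a = t := Sum.inl_injective h
          exact (mem_sdiff.mp ht).2 haS
        · exact Sum.inl_ne_inr h
      · -- e in M2, f in M1
        obtain ⟨a, rfl, haS⟩ := hM1mem f h2 x hxf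
        obtain ⟨⟨t, ht⟩, _, rfl⟩ := mem_image.mp h1
        rcases Sym2.mem_iff.mp hxe with h | h
        · obtain rfl : a = t := Sum.inl_injective h
          exact (mem_sdiff.mp ht).2 haS
        · exact Sum.inl_ne_inr h
      · -- both in M2
        obtain ⟨v, _, rfl⟩ := mem_image.mp h1
        obtain ⟨v', _, rfl⟩ := mem_image.mp h2
        have hvv : v ≠ v' := fun h => hef (by rw [h])
        rcases Sym2.mem_iff.mp hxe with h | h <;>
          rcases Sym2.mem_iff.mp hxf with h' | h'
        · exact hvv (Subtype.ext (Sum.inl_injective (h.symm.trans h')))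
        · exact Sum.inl_ne_inr (h.symm.trans h') |>.elim
        · exact Sum.inl_ne_inr (h'.symm.trans h) |>.elim
        · exact hvv (g.injective (Sum.inr_injective (h.symm.trans h')))
    · rintro (v | u)
      · by_cases hv : v ∈ S
        · obtain ⟨e', he', hve⟩ := mem_biUnion.mp hv
          refine ⟨Sym2.map Sum.inl e', mem_union_left _ (mem_image_of_mem _ he'), ?_⟩
          exact Sym2.mem_map.mpr ⟨v, (mem_filter.mp hve).2, rfl⟩
        · have hvT : v ∈ T := mem_sdiff.mpr ⟨mem_univ v, hv⟩
          exact ⟨s(Sum.inl v, Sum.inr (g ⟨v, hvT⟩)),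
            mem_union_right _ (mem_image_of_mem _ (mem_attach _ ⟨v, hvT⟩)), by simp⟩
      · refine ⟨s(Sum.inl (g.symm u).1, Sum.inr (g (g.symm u))),
          mem_union_right _ (mem_image_of_mem _ (mem_attach _ _)), ?_⟩
        simp
  have hMsum : ∑ e ∈ M1 ∪ M2, liftedWeight w' e = ∑ e ∈ M', w' e := by
    rw [sum_union hdisjM]
    have h2 : ∑ e ∈ M2, liftedWeight w' e = 0 := by
      refine sum_eq_zero fun e he => ?_
      obtain ⟨v, _, rfl⟩ := mem_image.mp he
      exact lifted_F w' _ _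
    have h1 : ∑ e ∈ M1, liftedWeight w' e = ∑ e ∈ M', w' e := by
      rw [hM1, sum_image (fun a _ b _ h => hinj h)]
      exact sum_congr rfl fun e _ => lifted_map w' e
    rw [h1, h2, add_zero]
  have hFzero : ∑ e ∈ Mstar.filter (fun e => isFEdge e), liftedWeight w' e = 0 := by
    refine sum_eq_zero fun e he => ?_
    obtain ⟨heM, heF⟩ := mem_filter.mp he
    rcases edge_cases (hedges' e heM) with ⟨a, b, _, rfl⟩ | ⟨a, u, rfl⟩
    · exact absurd heF (notF_inl a b)
    · exact lifted_F w' a u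
  calc ∑ e ∈ M', w' e = ∑ e ∈ M1 ∪ M2, liftedWeight w' e := hMsum.symm
    _ ≤ ∑ e ∈ Mstar, liftedWeight w' e := hmax _ hMperf
    _ = ∑ e ∈ Mstar.filter (fun e => ¬ isFEdge e), liftedWeight w' e := by
        rw [← sum_filter_add_sum_filter_not Mstar (fun e => isFEdge e), hFzero, zero_add]
end

section
/- Let G = (V, E) be a graph with edge weights w, in which every minimum cut has exactly 2 edges. Let H be the graph on vertex set E with an edge between e and f whenever {e, f} is a (minimum) cut of G. Then for every t ∈ ℝ: H has a subgraph H' with exactly k edges satisfying Σ_{e ∈ E} f_e(d_{H'}(e)) ≥ t, where f_e(i) = w(e)·i·(k − i), if and only if there exist k distinct 2-element cuts C₁, ..., C_k of G with Σ_{1 ≤ i < j ≤ k} w(C_i △ C_j) ≥ t. -/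
open Finset
open scoped Classical

/-- The set of edges of `G` crossing the cut `(X, Xᶜ)`. -/
noncomputable def cutEdges {α : Type*} [Fintype α] (G : SimpleGraph α)
    (X : Finset α) : Finset (Sym2 α) :=
  Finset.univ.filter fun e => e ∈ G.edgeSet ∧ ∃ a ∈ X, ∃ b ∈ Xᶜ, e = s(a, b)

/-- `C` is (the edge set of) a cut of `G`. -/
def IsCutSet {α : Type*} [Fintype α] (G : SimpleGraph α)
    (C : Finset (Sym2 α)) : Prop :=
  ∃ X : Finset α, X.Nonempty ∧ X ≠ Finset.univ ∧ C = cutEdges G X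

/-- The auxiliary graph `H` on the edges of `G`: two edges `e ≠ f` are
adjacent iff `{e, f}` is a cut of `G`. -/
noncomputable def cutPairGraph {α : Type*} [Fintype α] (G : SimpleGraph α) :
    SimpleGraph (Sym2 α) where
  Adj e f := e ≠ f ∧ IsCutSet G {e, f}
  symm := by
    constructor
    intro e f h
    exact ⟨h.1.symm, by rw [Finset.pair_comm]; exact h.2⟩
  loopless := ⟨fun e h => h.1 rfl⟩

lemma card_xor_pairs {k : ℕ} (P : Fin k → Prop) [DecidablePred P] :
    ((univ : Finset (Fin k × Fin k)).filter fun p =>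
        p.1 < p.2 ∧ ((P p.1 ∧ ¬ P p.2) ∨ (P p.2 ∧ ¬ P p.1))).card
      = (univ.filter P).card * (univ.filter fun i => ¬ P i).card := by
  rw [← Finset.card_product]
  apply Finset.card_nbij' (fun p => if P p.1 then p else p.swap)
      (fun p => if p.1 < p.2 then p else p.swap)
  · rintro ⟨a, b⟩ hp
    simp only [Finset.mem_coe, mem_filter, mem_univ, true_and] at hp
    obtain ⟨hab, h | h⟩ := hp
    · simp [h.1, mem_product, h.2, h.1]
    · have : ¬ P a := h.2
      simp [this, mem_product, h.1, h.2]
  · rintro ⟨a, b⟩ hp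
    simp only [Finset.mem_coe, mem_product, mem_filter, mem_univ, true_and] at hp
    have hne : a ≠ b := fun h => hp.2 (h ▸ hp.1)
    rcases lt_or_gt_of_ne hne with h | h
    · simp only [h, if_pos]
      simp [mem_filter, h, hp.1, hp.2]
    · have : ¬ a < b := not_lt_of_gt h
      simp only [this, if_neg, not_false_iff]
      simp [mem_filter, h, hp.1, hp.2]
  · rintro ⟨a, b⟩ hp
    simp only [Finset.mem_coe, mem_filter, mem_univ, true_and] at hp
    by_cases h : P a
    · simp [h, hp.1]
    · have : ¬ b < a := not_lt_of_gt hp.1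
      simp [h, this]
  · rintro ⟨a, b⟩ hp
    simp only [Finset.mem_coe, mem_product, mem_filter, mem_univ, true_and] at hp
    have hne : a ≠ b := fun h => hp.2 (h ▸ hp.1)
    rcases lt_or_gt_of_ne hne with h | h
    · simp [h, hp.1]
    · have : ¬ a < b := not_lt_of_gt h
      simp [this, hp.2, hp.1]

lemma sum_symmDiff_eq {α : Type*} [DecidableEq α] (w : α → ℝ) {k : ℕ}
    (C : Fin k → Finset α) (E : Finset α) (hE : ∀ i, C i ⊆ E) :
    ∑ p ∈ univ.filter (fun p : Fin k × Fin k => p.1 < p.2),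
        ∑ e ∈ symmDiff (C p.1) (C p.2), w e
      = ∑ e ∈ E, w e * ((univ.filter fun i => e ∈ C i).card : ℝ)
          * ((k : ℝ) - ((univ.filter fun i => e ∈ C i).card : ℝ)) := by
  have h1 : ∀ p : Fin k × Fin k, ∑ e ∈ symmDiff (C p.1) (C p.2), w e
      = ∑ e ∈ E, if e ∈ symmDiff (C p.1) (C p.2) then w e else 0 := by
    intro p
    rw [← Finset.sum_filter]
    congr 1
    ext x
    simp only [mem_filter, Finset.mem_symmDiff]
    constructor
    · rintro (⟨h, h'⟩ | ⟨h, h'⟩)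
      · exact ⟨hE _ h, Or.inl ⟨h, h'⟩⟩
      · exact ⟨hE _ h, Or.inr ⟨h, h'⟩⟩
    · exact fun h => h.2
  rw [Finset.sum_congr rfl fun p _ => h1 p, Finset.sum_comm]
  refine Finset.sum_congr rfl fun e _ => ?_
  rw [← Finset.sum_filter, Finset.sum_const, Finset.filter_filter, nsmul_eq_mul]
  have key : ((univ : Finset (Fin k × Fin k)).filter fun p =>
      p.1 < p.2 ∧ e ∈ symmDiff (C p.1) (C p.2)).card
      = (univ.filter fun i => e ∈ C i).card *
        (univ.filter fun i => ¬ (e ∈ C i)).card := by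
    rw [← card_xor_pairs (fun i => e ∈ C i)]
    congr 1
    ext p
    simp [Finset.mem_symmDiff]
  have hsum : (univ.filter fun i => e ∈ C i).card
      + (univ.filter fun i => ¬ (e ∈ C i)).card = k := by
    rw [Finset.card_filter_add_card_filter_not, Finset.card_univ,
      Fintype.card_fin]
  have hcast : ((univ.filter fun i => ¬ (e ∈ C i)).card : ℝ)
      = (k : ℝ) - ((univ.filter fun i => e ∈ C i).card : ℝ) := by
    have := congrArg (Nat.cast : ℕ → ℝ) hsum
    push_cast at this
    linarith
  rw [key]
  push_cast
  rw [hcast]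
  ring

noncomputable def sym2ToFinset {α : Type*} [Fintype α] [DecidableEq α]
    (p : Sym2 α) : Finset α := univ.filter (· ∈ p)

lemma mem_sym2ToFinset {α : Type*} [Fintype α] [DecidableEq α]
    {p : Sym2 α} {e : α} : e ∈ sym2ToFinset p ↔ e ∈ p := by
  simp [sym2ToFinset]

lemma sym2ToFinset_pair {α : Type*} [Fintype α] [DecidableEq α] (a b : α) :
    sym2ToFinset s(a, b) = {a, b} := by
  ext x
  simp [mem_sym2ToFinset, Sym2.mem_iff]

lemma sym2ToFinset_injective {α : Type*} [Fintype α] [DecidableEq α] :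
    Function.Injective (sym2ToFinset (α := α)) := by
  intro p q h
  apply Sym2.ext
  intro x
  rw [← mem_sym2ToFinset, ← mem_sym2ToFinset, h]

lemma isCutSet_congr {V : Type*} [Fintype V] {G : SimpleGraph V}
    {C D : Finset (Sym2 V)} (h : ∀ x, x ∈ C ↔ x ∈ D) (hC : IsCutSet G C) :
    IsCutSet G D := by
  have : C = D := Finset.ext h
  exact this ▸ hC

lemma edge_props {V : Type*} [Fintype V] [DecidableEq V] (G : SimpleGraph V)
    {p : Sym2 (Sym2 V)} (hp : p ∈ (cutPairGraph G).edgeSet) :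
    IsCutSet G (sym2ToFinset p) ∧ (sym2ToFinset p).card = 2 := by
  induction p using Sym2.ind with
  | _ e f =>
    rw [SimpleGraph.mem_edgeSet] at hp
    simp only [cutPairGraph] at hp
    obtain ⟨hne, hcut⟩ := hp
    rw [sym2ToFinset_pair]
    exact ⟨isCutSet_congr (fun x => by simp) hcut, Finset.card_pair hne⟩

lemma edge_of_cut {V : Type*} [Fintype V] [DecidableEq V] (G : SimpleGraph V)
    {C : Finset (Sym2 V)} (hC : IsCutSet G C) (h2 : C.card = 2) :
    ∃ p, p ∈ (cutPairGraph G).edgeSet ∧ sym2ToFinset p = C := by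
  obtain ⟨a, b, hab, rfl⟩ := Finset.card_eq_two.mp h2
  refine ⟨s(a, b), ?_, sym2ToFinset_pair a b⟩
  rw [SimpleGraph.mem_edgeSet]
  simp only [cutPairGraph]
  exact ⟨hab, isCutSet_congr (fun x => by simp) hC⟩

lemma cut_subset {V : Type*} [Fintype V] [DecidableEq V] {G : SimpleGraph V}
    {C : Finset (Sym2 V)} (h : IsCutSet G C) :
    C ⊆ univ.filter (fun e : Sym2 V => e ∈ G.edgeSet) := by
  obtain ⟨X, _, _, rfl⟩ := h
  intro e he
  simp only [cutEdges, mem_filter, mem_univ, true_and] at he ⊢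
  exact he.1

lemma filter_image_card {γ : Type*} [DecidableEq γ] {k : ℕ}
    (ψ : Fin k → γ) (hinj : Function.Injective ψ) (Q : γ → Prop)
    [DecidablePred Q] :
    ((univ.image ψ).filter Q).card = (univ.filter fun i => Q (ψ i)).card := by
  rw [Finset.filter_image, Finset.card_image_of_injective _ hinj]

/-- Lemma 11: assuming every cut of `G` has at least `2` edges, `H` has a
`k`-edge subgraph `H'` with `Σ_e w(e)·d_{H'}(e)·(k − d_{H'}(e)) ≥ t` iff there
are `k` distinct `2`-element cuts `C₁, …, C_k` of `G` with
`Σ_{i<j} w(C_i △ C_j) ≥ t`. -/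
theorem diverse_min_cuts_degree_reduction
    {V : Type*} [Fintype V] [DecidableEq V] (G : SimpleGraph V)
    (w : Sym2 V → ℝ) (hw : ∀ e, 0 ≤ w e)
    (hmin : ∀ X : Finset V, X.Nonempty → X ≠ Finset.univ →
      2 ≤ (cutEdges G X).card)
    (k : ℕ) (t : ℝ) :
    (∃ S : Finset (Sym2 (Sym2 V)),
        (↑S : Set (Sym2 (Sym2 V))) ⊆ (cutPairGraph G).edgeSet ∧
        S.card = k ∧
        t ≤ ∑ e ∈ Finset.univ.filter (fun e : Sym2 V => e ∈ G.edgeSet),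
              w e * ((S.filter fun p => e ∈ p).card : ℝ) *
                ((k : ℝ) - ((S.filter fun p => e ∈ p).card : ℝ))) ↔
      ∃ C : Fin k → Finset (Sym2 V),
        Function.Injective C ∧
        (∀ i, IsCutSet G (C i) ∧ (C i).card = 2) ∧
        t ≤ ∑ p ∈ Finset.univ.filter (fun p : Fin k × Fin k => p.1 < p.2),
              ∑ e ∈ symmDiff (C p.1) (C p.2), w e := by
  constructor
  · rintro ⟨S, hS, hcard, hsum⟩
    have σ : Fin k ≃ S := (S.equivFin.trans (finCongr hcard)).symm
    set ψ : Fin k → Sym2 (Sym2 V) := fun i => (σ i : Sym2 (Sym2 V)) with hψ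
    have hinj : Function.Injective ψ :=
      fun i j h => σ.injective (Subtype.ext h)
    have hSimg : univ.image ψ = S := by
      apply Finset.eq_of_subset_of_card_le
      · intro p hp
        obtain ⟨i, _, rfl⟩ := Finset.mem_image.mp hp
        exact (σ i).2
      · rw [Finset.card_image_of_injective _ hinj, Finset.card_univ,
          Fintype.card_fin, hcard]
    have hedge : ∀ i, ψ i ∈ (cutPairGraph G).edgeSet := fun i =>
      hS (Finset.mem_coe.mpr (σ i).2)
    refine ⟨fun i => sym2ToFinset (ψ i),
      fun i j h => hinj (sym2ToFinset_injective h),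
      fun i => edge_props G (hedge i), ?_⟩
    rw [sum_symmDiff_eq w _ _ (fun i => cut_subset (edge_props G (hedge i)).1)]
    have hdeg : ∀ e : Sym2 V, (S.filter fun p => e ∈ p).card
        = (univ.filter fun i => e ∈ sym2ToFinset (ψ i)).card := by
      intro e
      rw [← hSimg, filter_image_card ψ hinj]
      simp_rw [mem_sym2ToFinset]
    refine le_trans hsum (le_of_eq ?_)
    exact Finset.sum_congr rfl fun e _ => by rw [hdeg e]
  · rintro ⟨C, hCinj, hC, hsum⟩
    have hex : ∀ i, ∃ p, p ∈ (cutPairGraph G).edgeSet ∧ sym2ToFinset p = C i :=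
      fun i => edge_of_cut G (hC i).1 (hC i).2
    choose ψ hψedge hψC using hex
    have hinj : Function.Injective ψ := fun i j h => by
      apply hCinj
      rw [← hψC i, ← hψC j, h]
    refine ⟨univ.image ψ, ?_, ?_, ?_⟩
    · intro p hp
      obtain ⟨i, _, rfl⟩ := Finset.mem_image.mp (Finset.mem_coe.mp hp)
      exact hψedge i
    · rw [Finset.card_image_of_injective _ hinj, Finset.card_univ,
        Fintype.card_fin]
    · have hdeg : ∀ e : Sym2 V, ((univ.image ψ).filter fun p => e ∈ p).card
          = (univ.filter fun i => e ∈ C i).card := by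
        intro e
        rw [filter_image_card ψ hinj]
        congr 1
        ext i
        simp only [mem_filter, mem_univ, true_and]
        rw [← hψC i, mem_sym2ToFinset]
      rw [sum_symmDiff_eq w C _ (fun i => cut_subset (hC i).1)] at hsum
      refine le_trans hsum (le_of_eq ?_)
      exact Finset.sum_congr rfl fun e _ => by rw [hdeg e]
end
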